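/- arXiv:1508.05273 — 4 statements merged into one kernel-verified Lean document; each statement's English description precedes it below -/
import Mathlib

section
/- Let A be a complex I₁ × (I₂·I₃) matrix (indexed by Fin I₁ and Fin I₂ × Fin I₃, viewed as the mode-1 unfolding of a three-way tensor). Suppose σ ≥ 0 and the unit vectors u₁ : Fin I₁ → ℂ and v₁ : Fin I₂ × Fin I₃ → ℂ form a dominant singular triplet of A, i.e. A *ᵥ v₁ = σ • u₁, Aᴴ *ᵥ u₁ = σ • v₁, and ‖A *ᵥ z‖ ≤ σ·‖z‖ for every z. Let u₂ : Fin I₂ → ℂ and u₃ : Fin I₃ → ℂ be any unit vectors, set λ = ∑_{i,j,k} A i (j,k) · conj(u₁ i) · conj(u₂ j) · conj(u₃ k), and let X_TH be the matrix with entries X_TH i (j,k) = λ · u₁ i · u₂ j · u₃ k (the THOSVD rank-1 approximation). Let w : Fin I₂ × Fin I₃ → ℂ be a unit vector of product form (there exist a, b with w (j,k) = a j · b k for all j,k) satisfying |∑_{j,k} conj(v₁ (j,k)) · w (j,k)| ≥ |∑_{j,k} conj(v₁ (j,k)) · z (j,k)| for every unit vector z of product form, and let X_Se be the matrix with entries X_Se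 i (j,k) = (∑_{j',k'} A i (j',k') · w (j',k')) · conj(w (j,k)) (the SeROAP rank-1 approximation). Then ‖A − X_Se‖_F ≤ ‖A − X_TH‖_F. -/
open ComplexConjugate

lemma seroap_cs {n : Type*} [Fintype n] (x y : n → ℂ) :
    ‖∑ i, conj (x i) * y i‖ ≤
      Real.sqrt (∑ i, ‖x i‖ ^ 2) * Real.sqrt (∑ i, ‖y i‖ ^ 2) := by
  have h := norm_inner_le_norm (𝕜 := ℂ) (E := EuclideanSpace ℂ n)
    ((EuclideanSpace.equiv n ℂ).symm x) ((EuclideanSpace.equiv n ℂ).symm y)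
  simpa [EuclideanSpace.norm_eq, PiLp.inner_apply, RCLike.inner_apply, mul_comm] using h

lemma seroap_frob_expand {m n : Type*} [Fintype m] [Fintype n]
    (A X : Matrix m n ℂ) (r : ℝ)
    (h1 : ∑ i, ∑ p, A i p * conj (X i p) = (r : ℂ))
    (h2 : ∑ i, ∑ p, X i p * conj (X i p) = (r : ℂ)) :
    ∑ i, ∑ p, ‖A i p - X i p‖ ^ 2
      = (∑ i, ∑ p, ‖A i p‖ ^ 2) - r := by
  have habs : ∀ d : ℂ, ‖d‖ ^ 2 = (d * conj d).re := fun d => by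
    rw [Complex.mul_conj]; simp [Complex.sq_norm]
  have hc : (∑ i, ∑ p, X i p * conj (A i p)) = (r : ℂ) := by
    have h := congrArg (starRingEnd ℂ) h1
    simpa [map_sum, mul_comm, Complex.conj_ofReal] using h
  have hsum : (∑ i, ∑ p, (A i p - X i p) * conj (A i p - X i p))
      = (∑ i, ∑ p, A i p * conj (A i p)) - (r : ℂ) := by
    have expand : ∀ i p, (A i p - X i p) * conj (A i p - X i p)
        = A i p * conj (A i p) - A i p * conj (X i p)
          - X i p * conj (A i p) + X i p * conj (X i p) := by
      intro i p; rw [map_sub]; ring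
    calc (∑ i, ∑ p, (A i p - X i p) * conj (A i p - X i p))
        = (∑ i, ∑ p, A i p * conj (A i p)) - (∑ i, ∑ p, A i p * conj (X i p))
          - (∑ i, ∑ p, X i p * conj (A i p)) + (∑ i, ∑ p, X i p * conj (X i p)) := by
          simp only [expand, Finset.sum_sub_distrib, Finset.sum_add_distrib]
      _ = (∑ i, ∑ p, A i p * conj (A i p)) - (r : ℂ) := by rw [h1, h2, hc]; ring
  calc ∑ i, ∑ p, ‖A i p - X i p‖ ^ 2
      = (∑ i, ∑ p, (A i p - X i p) * conj (A i p - X i p)).re := by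
        simp [habs, Complex.re_sum]
    _ = ((∑ i, ∑ p, A i p * conj (A i p)) - (r : ℂ)).re := by rw [hsum]
    _ = (∑ i, ∑ p, ‖A i p‖ ^ 2) - r := by
        simp [Complex.sub_re, Complex.re_sum, habs]

lemma seroap_sum_sq_eq_one {n : Type*} [Fintype n] (v : n → ℂ)
    (h : Real.sqrt (∑ i, ‖v i‖ ^ 2) = 1) :
    (∑ i, ‖v i‖ ^ 2) = 1 := by
  have h0 : 0 ≤ ∑ i, ‖v i‖ ^ 2 :=
    Finset.sum_nonneg fun i _ => sq_nonneg _
  nlinarith [Real.sq_sqrt h0]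

lemma seroap_sum_mul_conj {n : Type*} [Fintype n] (v : n → ℂ) :
    ∑ i, v i * conj (v i) = ((∑ i, ‖v i‖ ^ 2 : ℝ) : ℂ) := by
  have h : ∀ i, v i * conj (v i) = ((‖v i‖ ^ 2 : ℝ) : ℂ) := fun i => by
    rw [Complex.mul_conj, Complex.sq_norm]
  simp only [h]
  norm_cast

lemma seroap_sum_mul_conj_one {n : Type*} [Fintype n] (v : n → ℂ)
    (h : Real.sqrt (∑ i, ‖v i‖ ^ 2) = 1) :
    ∑ i, v i * conj (v i) = 1 := by
  rw [seroap_sum_mul_conj, seroap_sum_sq_eq_one v h]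
  norm_num

/-- SeROAP performs at least as well as THOSVD on three-way tensors (Proposition 1):
given the mode-1 unfolding `A` of a three-way tensor, the THOSVD rank-1 approximation built
from dominant singular vectors `u₁, u₂, u₃` of the unfoldings, and the SeROAP approximation
built from the closest unit product vector `w` to the dominant right singular vector `v₁`,
the Frobenius error of SeROAP is at most that of THOSVD. -/
theorem seroap_le_thosvd {I1 I2 I3 : ℕ}
    (A : Matrix (Fin I1) (Fin I2 × Fin I3) ℂ)
    (σ : ℝ) (hσ : 0 ≤ σ)
    (u1 : Fin I1 → ℂ) (v1 : Fin I2 × Fin I3 → ℂ)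
    (hu1 : Real.sqrt (∑ i, ‖u1 i‖ ^ 2) = 1)
    (hv1 : Real.sqrt (∑ p, ‖v1 p‖ ^ 2) = 1)
    (hAv : Matrix.mulVec A v1 = σ • u1)
    (hAu : Matrix.mulVec (Matrix.conjTranspose A) u1 = σ • v1)
    (hdom : ∀ z : Fin I2 × Fin I3 → ℂ,
      Real.sqrt (∑ i, ‖Matrix.mulVec A z i‖ ^ 2) ≤
        σ * Real.sqrt (∑ p, ‖z p‖ ^ 2))
    (u2 : Fin I2 → ℂ) (u3 : Fin I3 → ℂ)
    (hu2 : Real.sqrt (∑ j, ‖u2 j‖ ^ 2) = 1)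
    (hu3 : Real.sqrt (∑ k, ‖u3 k‖ ^ 2) = 1)
    (lam : ℂ)
    (hlam : lam = ∑ i, ∑ j, ∑ k, A i (j, k) * conj (u1 i) * conj (u2 j) * conj (u3 k))
    (XTH : Matrix (Fin I1) (Fin I2 × Fin I3) ℂ)
    (hXTH : ∀ i j k, XTH i (j, k) = lam * u1 i * u2 j * u3 k)
    (w : Fin I2 × Fin I3 → ℂ)
    (hwunit : Real.sqrt (∑ p, ‖w p‖ ^ 2) = 1)
    (hwprod : ∃ a : Fin I2 → ℂ, ∃ b : Fin I3 → ℂ, ∀ j k, w (j, k) = a j * b k)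
    (hwmax : ∀ z : Fin I2 × Fin I3 → ℂ,
      Real.sqrt (∑ p, ‖z p‖ ^ 2) = 1 →
      (∃ a : Fin I2 → ℂ, ∃ b : Fin I3 → ℂ, ∀ j k, z (j, k) = a j * b k) →
      ‖∑ p, conj (v1 p) * z p‖ ≤ ‖∑ p, conj (v1 p) * w p‖)
    (XSe : Matrix (Fin I1) (Fin I2 × Fin I3) ℂ)
    (hXSe : ∀ i j k, XSe i (j, k) = (∑ p, A i p * w p) * conj (w (j, k))) :
    Real.sqrt (∑ i, ∑ p, ‖A i p - XSe i p‖ ^ 2) ≤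
      Real.sqrt (∑ i, ∑ p, ‖A i p - XTH i p‖ ^ 2) := by
  classical
  set y : Fin I1 → ℂ := fun i => ∑ p, A i p * w p with hy
  set t : Fin I2 × Fin I3 → ℂ := fun p => u2 p.1 * u3 p.2 with ht
  set z : Fin I2 × Fin I3 → ℂ := fun p => conj (t p) with hzdef
  set Y : ℝ := ∑ i, ‖y i‖ ^ 2 with hYdef
  set L : ℝ := ‖lam‖ ^ 2 with hLdef
  have hXSe' : ∀ i p, XSe i p = y i * conj (w p) := fun i p => hXSe i p.1 p.2
  have hXTH' : ∀ i p, XTH i p = lam * u1 i * t p := fun i p => by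
    simpa [ht, mul_assoc] using hXTH i p.1 p.2
  -- the unit sums
  have hcw : ∑ p, w p * conj (w p) = 1 := seroap_sum_mul_conj_one w hwunit
  have hcu1 : ∑ i, u1 i * conj (u1 i) = 1 := seroap_sum_mul_conj_one u1 hu1
  have hct : ∑ p, t p * conj (t p) = 1 := by
    rw [Fintype.sum_prod_type]
    calc ∑ j, ∑ k, t (j, k) * conj (t (j, k))
        = ∑ j, ∑ k, (u2 j * conj (u2 j)) * (u3 k * conj (u3 k)) := by
          refine Finset.sum_congr rfl fun j _ => Finset.sum_congr rfl fun k _ => ?_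
          simp only [ht, map_mul]; ring
      _ = (∑ j, u2 j * conj (u2 j)) * (∑ k, u3 k * conj (u3 k)) :=
          (Finset.sum_mul_sum _ _ _ _).symm
      _ = 1 := by
          rw [seroap_sum_mul_conj_one u2 hu2, seroap_sum_mul_conj_one u3 hu3, one_mul]
  -- SeROAP error identity ingredients
  have h1Se : ∑ i, ∑ p, A i p * conj (XSe i p) = (Y : ℂ) := by
    have hrow : ∀ i, ∑ p, A i p * conj (XSe i p) = y i * conj (y i) := by
      intro i
      calc ∑ p, A i p * conj (XSe i p)
          = ∑ p, conj (y i) * (A i p * w p) := by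
            refine Finset.sum_congr rfl fun p _ => ?_
            rw [hXSe' i p, map_mul, Complex.conj_conj]; ring
        _ = conj (y i) * ∑ p, A i p * w p := (Finset.mul_sum _ _ _).symm
        _ = y i * conj (y i) := by rw [hy]; ring
    rw [Finset.sum_congr rfl fun i _ => hrow i]
    exact seroap_sum_mul_conj y
  have h2Se : ∑ i, ∑ p, XSe i p * conj (XSe i p) = (Y : ℂ) := by
    have hrow : ∀ i, ∑ p, XSe i p * conj (XSe i p) = y i * conj (y i) := by
      intro i
      calc ∑ p, XSe i p * conj (XSe i p)
          = ∑ p, (y i * conj (y i)) * (w p * conj (w p)) := by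
            refine Finset.sum_congr rfl fun p _ => ?_
            rw [hXSe' i p]; simp only [map_mul, Complex.conj_conj]; ring
        _ = (y i * conj (y i)) * ∑ p, w p * conj (w p) := (Finset.mul_sum _ _ _).symm
        _ = y i * conj (y i) := by rw [hcw, mul_one]
    rw [Finset.sum_congr rfl fun i _ => hrow i]
    exact seroap_sum_mul_conj y
  -- lam in unfolded form
  have hlam_r : ∑ i, ∑ p, A i p * conj (u1 i) * conj (t p) = lam := by
    rw [hlam]
    refine Finset.sum_congr rfl fun i _ => ?_
    rw [Fintype.sum_prod_type]
    refine Finset.sum_congr rfl fun j _ => Finset.sum_congr rfl fun k _ => ?_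
    simp only [ht, map_mul]; ring
  -- THOSVD error identity ingredients
  have h1TH : ∑ i, ∑ p, A i p * conj (XTH i p) = (L : ℂ) := by
    calc ∑ i, ∑ p, A i p * conj (XTH i p)
        = conj lam * ∑ i, ∑ p, A i p * conj (u1 i) * conj (t p) := by
          rw [Finset.mul_sum]
          refine Finset.sum_congr rfl fun i _ => ?_
          rw [Finset.mul_sum]
          refine Finset.sum_congr rfl fun p _ => ?_
          rw [hXTH' i p]; simp only [map_mul]; ring
      _ = conj lam * lam := by rw [hlam_r]
      _ = (L : ℂ) := by
          rw [mul_comm, Complex.mul_conj, hLdef, Complex.sq_norm]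
  have h2TH : ∑ i, ∑ p, XTH i p * conj (XTH i p) = (L : ℂ) := by
    have hrow : ∀ i, ∑ p, XTH i p * conj (XTH i p)
        = (lam * conj lam) * (u1 i * conj (u1 i)) := by
      intro i
      calc ∑ p, XTH i p * conj (XTH i p)
          = ∑ p, ((lam * conj lam) * (u1 i * conj (u1 i))) * (t p * conj (t p)) := by
            refine Finset.sum_congr rfl fun p _ => ?_
            rw [hXTH' i p]; simp only [map_mul]; ring
        _ = ((lam * conj lam) * (u1 i * conj (u1 i))) * ∑ p, t p * conj (t p) :=
            (Finset.mul_sum _ _ _).symm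
        _ = _ := by rw [hct, mul_one]
    calc ∑ i, ∑ p, XTH i p * conj (XTH i p)
        = ∑ i, (lam * conj lam) * (u1 i * conj (u1 i)) :=
          Finset.sum_congr rfl fun i _ => hrow i
      _ = (lam * conj lam) * ∑ i, u1 i * conj (u1 i) := (Finset.mul_sum _ _ _).symm
      _ = (L : ℂ) := by rw [hcu1, mul_one, Complex.mul_conj, hLdef, Complex.sq_norm]
  -- the key inequality L ≤ Y
  have hAuv : ∀ p, ∑ i, A i p * conj (u1 i) = (σ : ℂ) * conj (v1 p) := by
    intro p
    have h1 : Matrix.mulVec (Matrix.conjTranspose A) u1 p = (σ : ℂ) * v1 p := by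
      rw [hAu]; simp [Pi.smul_apply, Complex.real_smul]
    have h2 : conj (Matrix.mulVec (Matrix.conjTranspose A) u1 p)
        = ∑ i, A i p * conj (u1 i) := by
      simp [Matrix.mulVec, dotProduct, Matrix.conjTranspose_apply,
        map_sum, map_mul, mul_comm]
    rw [← h2, h1, map_mul, Complex.conj_ofReal]
  have hlam2 : lam = (σ : ℂ) * ∑ p, conj (v1 p) * z p := by
    rw [← hlam_r, Finset.sum_comm]
    calc ∑ p, ∑ i, A i p * conj (u1 i) * conj (t p)
        = ∑ p, (∑ i, A i p * conj (u1 i)) * conj (t p) := by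
          refine Finset.sum_congr rfl fun p _ => (Finset.sum_mul _ _ _).symm
      _ = ∑ p, ((σ : ℂ) * conj (v1 p)) * conj (t p) := by
          refine Finset.sum_congr rfl fun p _ => by rw [hAuv p]
      _ = (σ : ℂ) * ∑ p, conj (v1 p) * z p := by
          rw [Finset.mul_sum]
          refine Finset.sum_congr rfl fun p _ => ?_
          rw [hzdef]; ring
  have hz_unit : Real.sqrt (∑ p, ‖z p‖ ^ 2) = 1 := by
    have : (∑ p, ‖z p‖ ^ 2) = 1 := by
      have habs : ∀ p, ‖z p‖ ^ 2
          = ‖u2 p.1‖ ^ 2 * ‖u3 p.2‖ ^ 2 := by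
        intro p
        simp only [hzdef, ht, Complex.norm_conj, map_mul, norm_mul]
        ring
      calc ∑ p, ‖z p‖ ^ 2
          = ∑ p : Fin I2 × Fin I3, ‖u2 p.1‖ ^ 2 * ‖u3 p.2‖ ^ 2 :=
            Finset.sum_congr rfl fun p _ => habs p
        _ = ∑ j, ∑ k, ‖u2 j‖ ^ 2 * ‖u3 k‖ ^ 2 :=
            Fintype.sum_prod_type _
        _ = 1 := by
            rw [← Finset.sum_mul_sum, seroap_sum_sq_eq_one u2 hu2,
              seroap_sum_sq_eq_one u3 hu3, one_mul]
    rw [this, Real.sqrt_one]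
  have hz_prod : ∃ a : Fin I2 → ℂ, ∃ b : Fin I3 → ℂ, ∀ j k, z (j, k) = a j * b k :=
    ⟨fun j => conj (u2 j), fun k => conj (u3 k), fun j k => by
      simp only [hzdef, ht, map_mul]⟩
  have habs1 : ‖lam‖ ≤ σ * ‖∑ p, conj (v1 p) * w p‖ := by
    rw [hlam2, norm_mul, Complex.norm_real, Real.norm_eq_abs, abs_of_nonneg hσ]
    exact mul_le_mul_of_nonneg_left (hwmax z hz_unit hz_prod) hσ
  have hswap : (σ : ℂ) * ∑ p, conj (v1 p) * w p = ∑ i, conj (u1 i) * y i := by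
    calc (σ : ℂ) * ∑ p, conj (v1 p) * w p
        = ∑ p, ((σ : ℂ) * conj (v1 p)) * w p := by
          rw [Finset.mul_sum]
          exact Finset.sum_congr rfl fun p _ => by ring
      _ = ∑ p, (∑ i, A i p * conj (u1 i)) * w p := by
          refine Finset.sum_congr rfl fun p _ => by rw [hAuv p]
      _ = ∑ p, ∑ i, A i p * conj (u1 i) * w p := by
          refine Finset.sum_congr rfl fun p _ => Finset.sum_mul _ _ _
      _ = ∑ i, ∑ p, A i p * conj (u1 i) * w p := Finset.sum_comm
      _ = ∑ i, conj (u1 i) * y i := by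
          refine Finset.sum_congr rfl fun i _ => ?_
          rw [hy, Finset.mul_sum]
          exact Finset.sum_congr rfl fun p _ => by ring
  have habs2 : σ * ‖∑ p, conj (v1 p) * w p‖
      = ‖∑ i, conj (u1 i) * y i‖ := by
    rw [← hswap, norm_mul, Complex.norm_real, Real.norm_eq_abs, abs_of_nonneg hσ]
  have habs3 : ‖∑ i, conj (u1 i) * y i‖ ≤ Real.sqrt Y := by
    have h := seroap_cs u1 y
    rwa [hu1, one_mul, ← hYdef] at h
  have hY0 : (0 : ℝ) ≤ Y := Finset.sum_nonneg fun i _ => sq_nonneg _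
  have hLY : L ≤ Y := by
    have h : ‖lam‖ ≤ Real.sqrt Y := by
      calc ‖lam‖ ≤ σ * ‖∑ p, conj (v1 p) * w p‖ := habs1
        _ = ‖∑ i, conj (u1 i) * y i‖ := habs2
        _ ≤ Real.sqrt Y := habs3
    nlinarith [norm_nonneg lam, Real.sq_sqrt hY0, Real.sqrt_nonneg Y]
  rw [seroap_frob_expand A XSe Y h1Se h2Se, seroap_frob_expand A XTH L h1TH h2TH]
  exact Real.sqrt_le_sqrt (by linarith)
end

section
/- Let T : Fin I₁ → Fin I₂ → Fin I₃ → ℂ be a three-way tensor. For unit vectors x : Fin I₁ → ℂ and y : Fin I₂ → ℂ define g(x,y) = ∑_k |∑_{i,j} T i j k · conj(x i) · conj(y j)|². Let x₀, y₀ be unit vectors and β : Fin I₃ → ℂ arbitrary, so that φ(T) with entries β k · x₀ i · y₀ j is an arbitrary rank-1 approximation of T built on (x₀, y₀). Suppose (x_t) and (y_t) are sequences of unit vectors with x_0 = x₀, such that for every t, y_{t+1} maximizes y ↦ g(x_t, y) over the unit sphere and x_{t+1} maximizes x ↦ g(x, y_{t+1}) over the unit sphere (the coupled-eigenvalue iteration).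 Then for every t ≥ 1, setting α* k = ∑_{i,j} T i j k · conj(x_t i) · conj(y_t j) and φ*(T) the tensor with entries α* k · x_t i · y_t j, one has ∑_{i,j,k} |T i j k − φ*(T) i j k|² ≤ ∑_{i,j,k} |T i j k − φ(T) i j k|². -/
open ComplexConjugate

private lemma key_residual {I1 I2 I3 : ℕ}
    (T : Fin I1 → Fin I2 → Fin I3 → ℂ)
    (x : Fin I1 → ℂ) (y : Fin I2 → ℂ) (β : Fin I3 → ℂ)
    (hx : ∑ i, ‖x i‖ ^ 2 = 1)
    (hy : ∑ j, ‖y j‖ ^ 2 = 1) :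
    ∑ i, ∑ j, ∑ k, ‖T i j k - β k * x i * y j‖ ^ 2 =
    (∑ i, ∑ j, ∑ k, ‖T i j k‖ ^ 2)
    - (∑ k, ‖∑ i, ∑ j, T i j k * conj (x i) * conj (y j)‖ ^ 2)
    + ∑ k, ‖β k - ∑ i, ∑ j, T i j k * conj (x i) * conj (y j)‖ ^ 2 := by
  have hx' : ∑ i, Complex.normSq (x i) = 1 := by simpa [Complex.sq_norm] using hx
  have hy' : ∑ j, Complex.normSq (y j) = 1 := by simpa [Complex.sq_norm] using hy
  simp only [Complex.sq_norm]
  have swap : ∀ (f : Fin I1 → Fin I2 → Fin I3 → ℝ),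
      ∑ i, ∑ j, ∑ k, f i j k = ∑ k, ∑ i, ∑ j, f i j k := by
    intro f
    calc ∑ i, ∑ j, ∑ k, f i j k
        = ∑ i, ∑ k, ∑ j, f i j k := Finset.sum_congr rfl fun i _ => Finset.sum_comm
      _ = ∑ k, ∑ i, ∑ j, f i j k := Finset.sum_comm
  rw [swap, swap]
  rw [← Finset.sum_sub_distrib, ← Finset.sum_add_distrib]
  apply Finset.sum_congr rfl
  intro k _
  set ck : ℂ := ∑ i, ∑ j, T i j k * conj (x i) * conj (y j) with hck
  have expand : ∀ i j, Complex.normSq (T i j k - β k * x i * y j)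
      = Complex.normSq (T i j k) - 2 * (conj (β k) * (T i j k * conj (x i) * conj (y j))).re
        + Complex.normSq (β k) * Complex.normSq (x i) * Complex.normSq (y j) := by
    intro i j
    rw [Complex.normSq_sub, Complex.normSq_mul, Complex.normSq_mul]
    have : (T i j k * conj (β k * x i * y j)).re
        = (conj (β k) * (T i j k * conj (x i) * conj (y j))).re := by
      congr 1; simp [map_mul]; ring
    rw [this]; ring
  simp only [expand, Finset.sum_add_distrib, Finset.sum_sub_distrib]
  have h1 : ∑ i, ∑ j, (conj (β k) * (T i j k * conj (x i) * conj (y j))).re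
      = (conj (β k) * ck).re := by
    rw [hck]
    simp only [Finset.mul_sum, Complex.re_sum]
  have h1' : ∑ i, ∑ j, 2 * (conj (β k) * (T i j k * conj (x i) * conj (y j))).re
      = 2 * (conj (β k) * ck).re := by
    rw [← h1]; simp only [Finset.mul_sum]
  have h2 : ∑ i, ∑ j, Complex.normSq (β k) * Complex.normSq (x i) * Complex.normSq (y j)
      = Complex.normSq (β k) := by
    have : ∀ i, ∑ j, Complex.normSq (β k) * Complex.normSq (x i) * Complex.normSq (y j)
        = Complex.normSq (β k) * Complex.normSq (x i) := by
      intro i; rw [← Finset.mul_sum, hy', mul_one]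
    simp only [this]
    rw [← Finset.mul_sum, hx', mul_one]
  rw [h1', h2]
  have h3 : Complex.normSq (β k - ck)
      = Complex.normSq (β k) + Complex.normSq ck - 2 * (β k * conj ck).re := by
    rw [Complex.normSq_sub]
  have h4 : (β k * conj ck).re = (conj (β k) * ck).re := by
    rw [← Complex.conj_re (β k * conj ck)]
    simp [map_mul]
  rw [h3, h4]
  ring

/-- The coupled-eigenvalue iteration, initialized from a rank-1 approximation built on the
unit vectors `(x₀, y₀)`, produces after `t ≥ 1` steps a rank-1 approximation at least as good
as the initial one. -/
theorem coupled_eigenvalue_improves {I1 I2 I3 : ℕ}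
    (T : Fin I1 → Fin I2 → Fin I3 → ℂ)
    (g : (Fin I1 → ℂ) → (Fin I2 → ℂ) → ℝ)
    (hg : ∀ x y, g x y =
      ∑ k, ‖∑ i, ∑ j, T i j k * conj (x i) * conj (y j)‖ ^ 2)
    (x0 : Fin I1 → ℂ) (y0 : Fin I2 → ℂ)
    (hx0 : ∑ i, ‖x0 i‖ ^ 2 = 1)
    (hy0 : ∑ j, ‖y0 j‖ ^ 2 = 1)
    (β : Fin I3 → ℂ)
    (φT : Fin I1 → Fin I2 → Fin I3 → ℂ)
    (hφT : ∀ i j k, φT i j k = β k * x0 i * y0 j)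
    (x : ℕ → Fin I1 → ℂ) (y : ℕ → Fin I2 → ℂ)
    (hxinit : x 0 = x0)
    (hxunit : ∀ t, ∑ i, ‖x t i‖ ^ 2 = 1)
    (hyunit : ∀ t, ∑ j, ‖y t j‖ ^ 2 = 1)
    (hymax : ∀ t, ∀ y' : Fin I2 → ℂ, (∑ j, ‖y' j‖ ^ 2 = 1) →
      g (x t) y' ≤ g (x t) (y (t + 1)))
    (hxmax : ∀ t, ∀ x' : Fin I1 → ℂ, (∑ i, ‖x' i‖ ^ 2 = 1) →
      g x' (y (t + 1)) ≤ g (x (t + 1)) (y (t + 1))) :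
    ∀ t, 1 ≤ t →
      ∀ αstar : Fin I3 → ℂ,
        (∀ k, αstar k = ∑ i, ∑ j, T i j k * conj (x t i) * conj (y t j)) →
        ∀ φstarT : Fin I1 → Fin I2 → Fin I3 → ℂ,
          (∀ i j k, φstarT i j k = αstar k * x t i * y t j) →
          ∑ i, ∑ j, ∑ k, ‖T i j k - φstarT i j k‖ ^ 2 ≤
            ∑ i, ∑ j, ∑ k, ‖T i j k - φT i j k‖ ^ 2 := by
  have gmono : ∀ t, 1 ≤ t → g x0 y0 ≤ g (x t) (y t) := by
    intro t ht
    induction t, ht using Nat.le_induction with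
    | base =>
      have h1 : g (x 0) y0 ≤ g (x 0) (y 1) := hymax 0 y0 hy0
      have h2 : g (x 0) (y 1) ≤ g (x 1) (y 1) := hxmax 0 (x 0) (hxunit 0)
      rw [hxinit] at h1 h2
      linarith
    | succ n hn ih =>
      have h1 : g (x n) (y n) ≤ g (x n) (y (n + 1)) := hymax n (y n) (hyunit n)
      have h2 : g (x n) (y (n + 1)) ≤ g (x (n + 1)) (y (n + 1)) := hxmax n (x n) (hxunit n)
      linarith
  intro t ht αstar hα φstarT hφstar
  have hL : ∑ i, ∑ j, ∑ k, ‖T i j k - φstarT i j k‖ ^ 2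
      = (∑ i, ∑ j, ∑ k, ‖T i j k‖ ^ 2) - g (x t) (y t) := by
    have := key_residual T (x t) (y t) αstar (hxunit t) (hyunit t)
    simp only [hφstar]
    rw [this, hg]
    have hz : ∀ k : Fin I3,
        ‖αstar k - ∑ i, ∑ j, T i j k * conj (x t i) * conj (y t j)‖ ^ 2 = 0 := by
      intro k; rw [hα k]; simp
    simp [hz]
  have hR : (∑ i, ∑ j, ∑ k, ‖T i j k‖ ^ 2) - g x0 y0
      ≤ ∑ i, ∑ j, ∑ k, ‖T i j k - φT i j k‖ ^ 2 := by
    have := key_residual T x0 y0 β hx0 hy0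
    simp only [hφT]
    rw [this, hg]
    have : 0 ≤ ∑ k, ‖β k - ∑ i, ∑ j, T i j k * conj (x0 i) * conj (y0 j)‖ ^ 2 :=
      Finset.sum_nonneg fun k _ => sq_nonneg _
    linarith
  have := gmono t ht
  linarith
end

section
/- Let T : Fin I₁ → Fin I₂ → Fin I₃ → ℂ be a three-way tensor and define, for unit vectors x : Fin I₁ → ℂ and y : Fin I₂ → ℂ, g(x,y) = ∑_k |∑_{i,j} T i j k · conj(x i) · conj(y j)|². Suppose (x_t) and (y_t) are sequences of unit vectors such that for every t, y_{t+1} maximizes y ↦ g(x_t, y) over the unit sphere and x_{t+1} maximizes x ↦ g(x, y_{t+1}) over the unit sphere. Then g(x_t, y_t) ≤ ∑_{i,j,k} |T i j k|² for all t, and the sequence t ↦ g(x_t, y_t) converges to a (finite) limit. -/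
open ComplexConjugate Finset

lemma g_bound {I1 I2 I3 : ℕ} (T : Fin I1 → Fin I2 → Fin I3 → ℂ)
    (x : Fin I1 → ℂ) (y : Fin I2 → ℂ)
    (hx : ∑ i, ‖x i‖ ^ 2 = 1) (hy : ∑ j, ‖y j‖ ^ 2 = 1) :
    ∑ k, ‖∑ i, ∑ j, T i j k * conj (x i) * conj (y j)‖ ^ 2
      ≤ ∑ i, ∑ j, ∑ k, ‖T i j k‖ ^ 2 := by
  have hre : (∑ i, ∑ j, ∑ k, ‖T i j k‖ ^ 2)
      = ∑ k : Fin I3, ∑ p : Fin I1 × Fin I2, ‖T p.1 p.2 k‖ ^ 2 := by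
    simp_rw [Fintype.sum_prod_type]
    conv_rhs => rw [Finset.sum_comm]
    exact Finset.sum_congr rfl fun i _ => Finset.sum_comm
  rw [hre]
  apply Finset.sum_le_sum
  intro k _
  have h1 : ‖∑ i, ∑ j, T i j k * conj (x i) * conj (y j)‖
      ≤ ∑ p : Fin I1 × Fin I2, ‖T p.1 p.2 k‖ * (‖x p.1‖ * ‖y p.2‖) := by
    rw [Fintype.sum_prod_type]
    calc ‖∑ i, ∑ j, T i j k * conj (x i) * conj (y j)‖
        ≤ ∑ i, ‖∑ j, T i j k * conj (x i) * conj (y j)‖ := by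
          exact norm_sum_le _ _
      _ ≤ ∑ i, ∑ j, ‖T i j k * conj (x i) * conj (y j)‖ := by
          exact Finset.sum_le_sum fun i _ => norm_sum_le _ _
      _ = ∑ i, ∑ j, ‖T i j k‖ * (‖x i‖ * ‖y j‖) := by
          simp [norm_mul, Complex.norm_conj, mul_assoc]
  calc ‖∑ i, ∑ j, T i j k * conj (x i) * conj (y j)‖ ^ 2
      ≤ (∑ p : Fin I1 × Fin I2, ‖T p.1 p.2 k‖ * (‖x p.1‖ * ‖y p.2‖)) ^ 2 := by
        apply pow_le_pow_left₀ (norm_nonneg _) h1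
    _ ≤ (∑ p : Fin I1 × Fin I2, ‖T p.1 p.2 k‖ ^ 2)
        * (∑ p : Fin I1 × Fin I2, (‖x p.1‖ * ‖y p.2‖) ^ 2) :=
        Finset.sum_mul_sq_le_sq_mul_sq _ _ _
    _ = ∑ p : Fin I1 × Fin I2, ‖T p.1 p.2 k‖ ^ 2 := by
        have : (∑ p : Fin I1 × Fin I2, (‖x p.1‖ * ‖y p.2‖) ^ 2) = 1 := by
          simp_rw [Fintype.sum_prod_type, mul_pow, ← Finset.mul_sum, hy, mul_one]
          exact hx
        rw [this, mul_one]

/-- In the coupled-eigenvalue (alternating maximization) iteration, the objective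
`g (x_t) (y_t)` is bounded above by `‖T‖²` and the sequence `t ↦ g (x_t) (y_t)` converges. -/
theorem coupled_eigenvalue_converges {I1 I2 I3 : ℕ}
    (T : Fin I1 → Fin I2 → Fin I3 → ℂ)
    (g : (Fin I1 → ℂ) → (Fin I2 → ℂ) → ℝ)
    (hg : ∀ x y, g x y =
      ∑ k, ‖∑ i, ∑ j, T i j k * conj (x i) * conj (y j)‖ ^ 2)
    (x : ℕ → Fin I1 → ℂ) (y : ℕ → Fin I2 → ℂ)
    (hxunit : ∀ t, ∑ i, ‖x t i‖ ^ 2 = 1)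
    (hyunit : ∀ t, ∑ j, ‖y t j‖ ^ 2 = 1)
    (hymax : ∀ t, ∀ y' : Fin I2 → ℂ, (∑ j, ‖y' j‖ ^ 2 = 1) →
      g (x t) y' ≤ g (x t) (y (t + 1)))
    (hxmax : ∀ t, ∀ x' : Fin I1 → ℂ, (∑ i, ‖x' i‖ ^ 2 = 1) →
      g x' (y (t + 1)) ≤ g (x (t + 1)) (y (t + 1))) :
    (∀ t, g (x t) (y t) ≤ ∑ i, ∑ j, ∑ k, ‖T i j k‖ ^ 2) ∧
      ∃ L : ℝ, Filter.Tendsto (fun t => g (x t) (y t)) Filter.atTop (nhds L) := by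
  have hbound : ∀ t, g (x t) (y t) ≤ ∑ i, ∑ j, ∑ k, ‖T i j k‖ ^ 2 := by
    intro t
    rw [hg]
    exact g_bound T (x t) (y t) (hxunit t) (hyunit t)
  refine ⟨hbound, ?_⟩
  have hmono : Monotone (fun t => g (x t) (y t)) := by
    apply monotone_nat_of_le_succ
    intro t
    calc g (x t) (y t) ≤ g (x t) (y (t + 1)) := hymax t (y t) (hyunit t)
      _ ≤ g (x (t + 1)) (y (t + 1)) := hxmax t (x t) (hxunit t)
  have hbdd : BddAbove (Set.range fun t => g (x t) (y t)) := by
    refine ⟨∑ i, ∑ j, ∑ k, ‖T i j k‖ ^ 2, ?_⟩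
    rintro v ⟨t, rfl⟩
    exact hbound t
  exact ⟨_, tendsto_atTop_ciSup hmono hbdd⟩
end

section
/- Let R ≥ 1 and let e : ℕ → (N-way complex tensors of a fixed size) be the sequence of end-of-iteration residuals of the deflation (DCPD) algorithm: for every l, there exist tensors E_0^{(l)} = e(l), E_1^{(l)}, …, E_R^{(l)} = e(l+1) and tensors X_1^{(l)}, …, X_R^{(l)} of rank at most 1 such that E_r^{(l)} = (X_r^{(l)} + E_{r−1}^{(l)}) − φ_r^{(l)}, where φ_r^{(l)} is a best rank-1 approximation of X_r^{(l)} + E_{r−1}^{(l)}. Then the real sequence l ↦ ‖e(l)‖ is antitone (monotonically non-increasing). -/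
open ComplexConjugate

/-- The Frobenius norm of an `N`-way complex tensor. -/
noncomputable def tnorm {N : ℕ} {d : Fin N → ℕ} (T : ((n : Fin N) → Fin (d n)) → ℂ) : ℝ :=
  Real.sqrt (∑ x, ‖T x‖ ^ 2)

/-- A tensor has rank at most `1` when it is an outer product of vectors. -/
def RankOne {N : ℕ} {d : Fin N → ℕ} (T : ((n : Fin N) → Fin (d n)) → ℂ) : Prop :=
  ∃ a : (n : Fin N) → Fin (d n) → ℂ, ∀ x, T x = ∏ n, a n (x n)

/-- `φ` is a best rank-1 approximation of `T`. -/
def BestRankOneApprox {N : ℕ} {d : Fin N → ℕ}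
    (T φ : ((n : Fin N) → Fin (d n)) → ℂ) : Prop :=
  RankOne φ ∧ ∀ Z : ((n : Fin N) → Fin (d n)) → ℂ, RankOne Z → tnorm (T - φ) ≤ tnorm (T - Z)

/-- The norms of the end-of-iteration residuals of the DCPD deflation algorithm form a
monotonically non-increasing sequence. -/
theorem dcpd_residual_antitone {N : ℕ} {d : Fin N → ℕ}
    (R : ℕ) (hR : 1 ≤ R)
    (e : ℕ → ((n : Fin N) → Fin (d n)) → ℂ)
    (h : ∀ l : ℕ, ∃ E X φ : ℕ → ((n : Fin N) → Fin (d n)) → ℂ,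
      E 0 = e l ∧ E R = e (l + 1) ∧
      ∀ r ∈ Finset.Icc 1 R, RankOne (X r) ∧
        BestRankOneApprox (X r + E (r - 1)) (φ r) ∧
        E r = (X r + E (r - 1)) - φ r) :
    Antitone fun l => tnorm (e l) := by
  apply antitone_nat_of_succ_le
  intro l
  obtain ⟨E, X, φ, hE0, hER, hstep⟩ := h l
  show tnorm (e (l + 1)) ≤ tnorm (e l)
  rw [← hE0, ← hER]
  have key : ∀ r, r ≤ R → tnorm (E r) ≤ tnorm (E 0) := by
    intro r
    induction r with
    | zero => intro _; exact le_refl _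
    | succ n ih =>
      intro hn
      obtain ⟨hX, ⟨hφ1, hφ2⟩, hEeq⟩ := hstep (n + 1)
        (Finset.mem_Icc.mpr ⟨Nat.succ_le_succ (Nat.zero_le n), hn⟩)
      have h1 : tnorm (E (n + 1)) ≤ tnorm (E n) := by
        rw [hEeq]
        have := hφ2 (X (n + 1)) hX
        simpa using this
      exact le_trans h1 (ih (le_trans (Nat.le_succ n) hn))
  exact key R le_rfl
end
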